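/- For λ real with 0 < λ small, the two branches of roots of μ⁴ + α₂μ² + α₁μ + α₀ = 0 bifurcating from μ = 0 admit expansions μ = λμ₁ + O(λ³) with μ₁ = 1/(s ± √(βR₁³)); in particular, when 0 < s < √(βR₁³), the two branches have leading coefficients of opposite signs, so one root moves into the right half-plane and one into the left half-plane. -/

import Mathlib

open Filter Topology Asymptotics

private lemma stmt19_aux (b c s q μ : ℝ) (hq2 : q ^ 2 = b) (hq0 : 0 < q) (hs : 0 < s)
    (hqs : 0 < q - s) (hcb : |c| * μ ^ 2 ≤ b / 2)
    (hcb2 : |c| * μ ^ 2 ≤ q * (q - s) / 2) :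
    Real.sqrt (b + c * μ ^ 2) ^ 2 = b + c * μ ^ 2 ∧
    (s + q) / 2 ≤ Real.sqrt (b + c * μ ^ 2) ∧
    |q - Real.sqrt (b + c * μ ^ 2)| ≤ |c| * μ ^ 2 / q := by
  have hb0 : 0 < b := by nlinarith
  have hc' : -(|c| * μ ^ 2) ≤ c * μ ^ 2 := by
    have := mul_le_mul_of_nonneg_right (neg_abs_le c) (sq_nonneg μ)
    linarith [this]
  have hpos : 0 < b + c * μ ^ 2 := by nlinarith
  set X := Real.sqrt (b + c * μ ^ 2) with hX
  have hsq : X ^ 2 = b + c * μ ^ 2 := Real.sq_sqrt hpos.le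
  have hH0 : 0 ≤ X := Real.sqrt_nonneg _
  have hH2 : ((s + q) / 2) ^ 2 ≤ X ^ 2 := by
    nlinarith [mul_pos hqs (show (0:ℝ) < q + s by linarith)]
  have hlow : (s + q) / 2 ≤ X := by nlinarith
  refine ⟨hsq, hlow, ?_⟩
  have hprod : |q - X| * (q + X) = |c| * μ ^ 2 := by
    have h1 : (q - X) * (q + X) = -(c * μ ^ 2) := by nlinarith
    calc |q - X| * (q + X) = |q - X| * |q + X| := by
          rw [abs_of_pos (show (0:ℝ) < q + X by linarith)]
      _ = |(q - X) * (q + X)| := (abs_mul _ _).symm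
      _ = |-(c * μ ^ 2)| := by rw [h1]
      _ = |c| * μ ^ 2 := by rw [abs_neg, abs_mul, abs_of_nonneg (sq_nonneg μ)]
  rw [le_div_iff₀ hq0]
  calc |q - X| * q ≤ |q - X| * (q + X) :=
        mul_le_mul_of_nonneg_left (by linarith) (abs_nonneg _)
    _ = |c| * μ ^ 2 := hprod

private lemma stmt19_quart (b c s l μ h : ℝ) (hc0 : c ≠ 0) (hh : h ^ 2 = b + c * μ ^ 2)
    (key : (l - s * μ) ^ 2 = μ ^ 2 * h ^ 2) :
    μ ^ 4 + (b - s ^ 2) / c * μ ^ 2 + 2 * s * l / c * μ - l ^ 2 / c = 0 := by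
  have k2 : (l - s * μ) ^ 2 = μ ^ 2 * (b + c * μ ^ 2) := by rw [key, hh]
  field_simp
  linear_combination -k2

private lemma stmt19_boundP (c s q l μ h : ℝ) (hs : 0 < s) (hq0 : 0 < q) (hl : 0 < l)
    (hμ0 : 0 < μ) (hμle : μ ≤ l / s) (heq : μ * (s + h) = l)
    (hnear : |q - h| ≤ |c| * μ ^ 2 / q) :
    |μ - l * (1 / (s + q))| ≤ |c| / (s ^ 3 * q * (s + q)) * |l ^ 3| := by
  have hsq0 : (0:ℝ) < s + q := by linarith
  have e : μ - l * (1 / (s + q)) = μ * (q - h) / (s + q) := by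
    field_simp
    linear_combination heq
  rw [e, abs_div, abs_mul, abs_of_pos hμ0, abs_of_pos hsq0,
    abs_of_pos (pow_pos hl 3), div_le_iff₀ hsq0]
  have e2 : |c| / (s ^ 3 * q * (s + q)) * l ^ 3 * (s + q) = |c| * (l / s) ^ 3 / q := by
    field_simp
  rw [e2]
  have h3 : μ ^ 3 ≤ (l / s) ^ 3 := pow_le_pow_left₀ hμ0.le hμle 3
  calc μ * |q - h| ≤ μ * (|c| * μ ^ 2 / q) := mul_le_mul_of_nonneg_left hnear hμ0.le
    _ = |c| * μ ^ 3 / q := by ring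
    _ ≤ |c| * (l / s) ^ 3 / q := by
        have := mul_le_mul_of_nonneg_left h3 (abs_nonneg c)
        exact div_le_div_of_nonneg_right this hq0.le

private lemma stmt19_boundM (c s q l μ h : ℝ) (hs : 0 < s) (hq0 : 0 < q) (hqs : 0 < q - s)
    (hl : 0 < l) (hμ0 : μ < 0) (hμge : -(2 * l / (q - s)) ≤ μ) (heq : μ * (s - h) = l)
    (hnear : |q - h| ≤ |c| * μ ^ 2 / q) :
    |μ - l * (1 / (s - q))| ≤ 8 * |c| / ((q - s) ^ 4 * q) * |l ^ 3| := by
  have hsq0 : s - q < 0 := by linarith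
  have e : μ - l * (1 / (s - q)) = μ * (h - q) / (s - q) := by
    have : s - q ≠ 0 := by linarith
    field_simp
    linear_combination heq
  rw [e, abs_div, abs_mul, abs_of_neg hμ0, abs_of_neg hsq0,
    abs_of_pos (pow_pos hl 3)]
  have hnegs : -(s - q) = q - s := by ring
  rw [hnegs, div_le_iff₀ hqs]
  have hm : -μ ≤ 2 * l / (q - s) := by linarith
  have e2 : 8 * |c| / ((q - s) ^ 4 * q) * l ^ 3 * (q - s) = |c| * (2 * l / (q - s)) ^ 3 / q := by
    field_simp
    ring
  rw [e2]
  have hnear' : |h - q| ≤ |c| * (-μ) ^ 2 / q := by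
    rw [abs_sub_comm]
    have : (-μ) ^ 2 = μ ^ 2 := by ring
    rw [this]
    exact hnear
  have h3 : (-μ) ^ 3 ≤ (2 * l / (q - s)) ^ 3 := pow_le_pow_left₀ (by linarith) hm 3
  calc -μ * |h - q| ≤ -μ * (|c| * (-μ) ^ 2 / q) :=
        mul_le_mul_of_nonneg_left hnear' (by linarith)
    _ = |c| * (-μ) ^ 3 / q := by ring
    _ ≤ |c| * (2 * l / (q - s)) ^ 3 / q := by
        have := mul_le_mul_of_nonneg_left h3 (abs_nonneg c)
        exact div_le_div_of_nonneg_right this hq0.le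

set_option maxHeartbeats 1000000 in
/-- for real λ with 0 < λ small, the two branches of roots of
μ⁴ + α₂μ² + α₁μ + α₀ = 0 (α₂ = (βR₁³−s²)/(R₁³γ), α₁ = 2sλ/(R₁³γ),
α₀ = −λ²/(R₁³γ)) bifurcating from μ = 0 admit expansions μ = λμ₁ + O(λ³) with
μ₁ = 1/(s ± √(βR₁³)); when 0 < s < √(βR₁³) the two leading coefficients have
opposite signs, so one root moves into the right half-plane and one into the
left half-plane. -/
theorem stmt19 (β γ s R₁ : ℝ) (hβ : 0 < β) (hγ : γ ≠ 0) (hR₁ : 0 < R₁)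
    (hs : 0 < s) (hs' : s < Real.sqrt (β * R₁ ^ 3)) :
    ∃ μp μm : ℝ → ℝ,
      (∀ᶠ l in 𝓝[>] (0 : ℝ),
        (μp l ^ 4 + (β * R₁ ^ 3 - s ^ 2) / (R₁ ^ 3 * γ) * μp l ^ 2
          + 2 * s * l / (R₁ ^ 3 * γ) * μp l - l ^ 2 / (R₁ ^ 3 * γ) = 0) ∧
        (μm l ^ 4 + (β * R₁ ^ 3 - s ^ 2) / (R₁ ^ 3 * γ) * μm l ^ 2
          + 2 * s * l / (R₁ ^ 3 * γ) * μm l - l ^ 2 / (R₁ ^ 3 * γ) = 0)) ∧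
      (fun l => μp l - l * (1 / (s + Real.sqrt (β * R₁ ^ 3))))
        =O[𝓝[>] (0 : ℝ)] (fun l => l ^ 3) ∧
      (fun l => μm l - l * (1 / (s - Real.sqrt (β * R₁ ^ 3))))
        =O[𝓝[>] (0 : ℝ)] (fun l => l ^ 3) ∧
      0 < 1 / (s + Real.sqrt (β * R₁ ^ 3)) ∧
      1 / (s - Real.sqrt (β * R₁ ^ 3)) < 0 ∧
      (∀ᶠ l in 𝓝[>] (0 : ℝ), 0 < μp l ∧ μm l < 0) := by
  set b := β * R₁ ^ 3 with hbdef
  have hb0 : 0 < b := by positivity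
  set q := Real.sqrt b with hqdef
  have hq0 : 0 < q := Real.sqrt_pos.mpr hb0
  have hq2 : q ^ 2 = b := Real.sq_sqrt hb0.le
  set c := R₁ ^ 3 * γ with hcdef
  have hc0 : c ≠ 0 := by
    simp only [hcdef]
    exact mul_ne_zero (by positivity) hγ
  have hqs : 0 < q - s := sub_pos.mpr hs'
  obtain ⟨ε, hε0, hcε1, hcε2⟩ :
      ∃ ε : ℝ, 0 < ε ∧ |c| * ε ^ 2 ≤ b / 2 ∧ |c| * ε ^ 2 ≤ q * (q - s) / 2 := by
    have hmin0 : 0 < min (b / 2) (q * (q - s) / 2) := by positivity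
    refine ⟨Real.sqrt (min (b / 2) (q * (q - s) / 2) / (|c| + 1)), by positivity, ?_, ?_⟩ <;>
    · rw [Real.sq_sqrt (by positivity), mul_div_assoc']
      rw [div_le_iff₀ (by positivity)]
      first
        | nlinarith [abs_nonneg c, min_le_left (b / 2) (q * (q - s) / 2), hmin0]
        | nlinarith [abs_nonneg c, min_le_right (b / 2) (q * (q - s) / 2), hmin0]
  have hHfacts : ∀ μ : ℝ, |μ| ≤ ε →
      Real.sqrt (b + c * μ ^ 2) ^ 2 = b + c * μ ^ 2 ∧
      (s + q) / 2 ≤ Real.sqrt (b + c * μ ^ 2) ∧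
      |q - Real.sqrt (b + c * μ ^ 2)| ≤ |c| * μ ^ 2 / q := by
    intro μ hμ
    have hμ2 : μ ^ 2 ≤ ε ^ 2 := by
      have h1 := pow_le_pow_left₀ (abs_nonneg μ) hμ 2
      rwa [sq_abs] at h1
    have hm : |c| * μ ^ 2 ≤ |c| * ε ^ 2 := mul_le_mul_of_nonneg_left hμ2 (abs_nonneg c)
    exact stmt19_aux b c s q μ hq2 hq0 hs hqs (hm.trans hcε1) (hm.trans hcε2)
  obtain ⟨δ, hδ0, hδ1, hδ2⟩ : ∃ δ : ℝ, 0 < δ ∧ δ ≤ ε * s ∧ δ ≤ ε * (q - s) / 2 :=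
    ⟨min (ε * s) (ε * (q - s) / 2), by positivity, min_le_left _ _, min_le_right _ _⟩
  have hcont : Continuous fun μ : ℝ => Real.sqrt (b + c * μ ^ 2) :=
    Real.continuous_sqrt.comp (continuous_const.add (continuous_const.mul (continuous_pow 2)))
  -- existence of the two root branches
  have exP : ∀ l : ℝ, ∃ μ : ℝ, l ∈ Set.Ioo (0:ℝ) δ →
      0 < μ ∧ μ ≤ l / s ∧ μ * (s + Real.sqrt (b + c * μ ^ 2)) = l := by
    intro l
    by_cases hl : l ∈ Set.Ioo (0:ℝ) δ
    · obtain ⟨hl0, hlδ⟩ := hl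
      have hls0 : 0 < l / s := div_pos hl0 hs
      have hls : l / s ≤ ε := by
        rw [div_le_iff₀ hs]
        nlinarith
      obtain ⟨_, hHl, _⟩ := hHfacts (l / s) (by rwa [abs_of_pos hls0])
      have hgc : ContinuousOn (fun μ : ℝ => μ * (s + Real.sqrt (b + c * μ ^ 2)))
          (Set.Icc 0 (l / s)) :=
        (continuous_id.mul (continuous_const.add hcont)).continuousOn
      have hend : l < (fun μ : ℝ => μ * (s + Real.sqrt (b + c * μ ^ 2))) (l / s) := by
        simp only
        have h2 : l / s * s = l := div_mul_cancel₀ l hs.ne'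
        nlinarith
      have hmem : l ∈ Set.Ioo ((fun μ : ℝ => μ * (s + Real.sqrt (b + c * μ ^ 2))) 0)
          ((fun μ : ℝ => μ * (s + Real.sqrt (b + c * μ ^ 2))) (l / s)) := by
        constructor
        · simpa using hl0
        · exact hend
      obtain ⟨μ, hμmem, hμeq⟩ := intermediate_value_Ioo hls0.le hgc hmem
      exact ⟨μ, fun _ => ⟨hμmem.1, hμmem.2.le, hμeq⟩⟩
    · exact ⟨0, fun h => absurd h hl⟩
  have exM : ∀ l : ℝ, ∃ μ : ℝ, l ∈ Set.Ioo (0:ℝ) δ →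
      μ < 0 ∧ -(2 * l / (q - s)) ≤ μ ∧ μ * (s - Real.sqrt (b + c * μ ^ 2)) = l := by
    intro l
    by_cases hl : l ∈ Set.Ioo (0:ℝ) δ
    · obtain ⟨hl0, hlδ⟩ := hl
      set a : ℝ := -(2 * l / (q - s)) with hadef
      have ha0' : 0 < 2 * l / (q - s) := by positivity
      have ha0 : a < 0 := by rw [hadef]; linarith
      have haε : |a| ≤ ε := by
        rw [hadef, abs_neg, abs_of_pos ha0', div_le_iff₀ hqs]
        nlinarith
      obtain ⟨_, hHa, _⟩ := hHfacts a haε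
      have hgc : ContinuousOn (fun μ : ℝ => μ * (s - Real.sqrt (b + c * μ ^ 2)))
          (Set.Icc a 0) :=
        (continuous_id.mul (continuous_const.sub hcont)).continuousOn
      have hend : l ≤ (fun μ : ℝ => μ * (s - Real.sqrt (b + c * μ ^ 2))) a := by
        simp only
        have h1 : a * (s - Real.sqrt (b + c * a ^ 2))
            = 2 * l / (q - s) * (Real.sqrt (b + c * a ^ 2) - s) := by
          rw [hadef]; ring
        rw [h1]
        have h2 : (q - s) / 2 ≤ Real.sqrt (b + c * a ^ 2) - s := by linarith
        have h3 : 2 * l / (q - s) * ((q - s) / 2) = l := by field_simp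
        calc l = 2 * l / (q - s) * ((q - s) / 2) := h3.symm
          _ ≤ 2 * l / (q - s) * (Real.sqrt (b + c * a ^ 2) - s) :=
              mul_le_mul_of_nonneg_left h2 ha0'.le
      have hmem : l ∈ Set.Ioc ((fun μ : ℝ => μ * (s - Real.sqrt (b + c * μ ^ 2))) 0)
          ((fun μ : ℝ => μ * (s - Real.sqrt (b + c * μ ^ 2))) a) := by
        constructor
        · simpa using hl0
        · exact hend
      obtain ⟨μ, hμmem, hμeq⟩ := intermediate_value_Ico' ha0.le hgc hmem
      exact ⟨μ, fun _ => ⟨hμmem.2, hμmem.1, hμeq⟩⟩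
    · exact ⟨0, fun h => absurd h hl⟩
  choose μp hμp using exP
  choose μm hμm using exM
  have hεbP : ∀ l : ℝ, l ∈ Set.Ioo (0:ℝ) δ → |μp l| ≤ ε := by
    intro l hl
    obtain ⟨hp0, hple, _⟩ := hμp l hl
    have hls : l / s ≤ ε := by
      rw [div_le_iff₀ hs]
      nlinarith [hl.1, hl.2]
    rw [abs_of_pos hp0]
    exact hple.trans hls
  have hεbM : ∀ l : ℝ, l ∈ Set.Ioo (0:ℝ) δ → |μm l| ≤ ε := by
    intro l hl
    obtain ⟨hm0, hmge, _⟩ := hμm l hl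
    have h2 : 2 * l / (q - s) ≤ ε := by
      rw [div_le_iff₀ hqs]
      nlinarith [hl.1, hl.2]
    rw [abs_of_neg hm0]
    linarith
  refine ⟨μp, μm, ?_, ?_, ?_, ?_, ?_, ?_⟩
  · -- the quartic equations
    filter_upwards [Ioo_mem_nhdsGT_of_mem (Set.left_mem_Ico.mpr hδ0)] with l hl
    obtain ⟨hp0, hple, hpeq⟩ := hμp l hl
    obtain ⟨hm0, hmge, hmeq⟩ := hμm l hl
    obtain ⟨hps, _, _⟩ := hHfacts (μp l) (hεbP l hl)
    obtain ⟨hms, _, _⟩ := hHfacts (μm l) (hεbM l hl)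
    constructor
    · refine stmt19_quart b c s l (μp l) _ hc0 hps ?_
      have h1 : l - s * μp l = μp l * Real.sqrt (b + c * μp l ^ 2) := by
        linear_combination -hpeq
      rw [h1, mul_pow]
    · refine stmt19_quart b c s l (μm l) _ hc0 hms ?_
      have h1 : l - s * μm l = -(μm l * Real.sqrt (b + c * μm l ^ 2)) := by
        linear_combination -hmeq
      rw [h1]
      ring
  · -- big O for the plus branch
    rw [Asymptotics.isBigO_iff]
    refine ⟨|c| / (s ^ 3 * q * (s + q)), ?_⟩
    filter_upwards [Ioo_mem_nhdsGT_of_mem (Set.left_mem_Ico.mpr hδ0)] with l hl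
    obtain ⟨hp0, hple, hpeq⟩ := hμp l hl
    obtain ⟨_, _, hnear⟩ := hHfacts (μp l) (hεbP l hl)
    rw [Real.norm_eq_abs, Real.norm_eq_abs]
    exact stmt19_boundP c s q l (μp l) _ hs hq0 hl.1 hp0 hple hpeq hnear
  · -- big O for the minus branch
    rw [Asymptotics.isBigO_iff]
    refine ⟨8 * |c| / ((q - s) ^ 4 * q), ?_⟩
    filter_upwards [Ioo_mem_nhdsGT_of_mem (Set.left_mem_Ico.mpr hδ0)] with l hl
    obtain ⟨hm0, hmge, hmeq⟩ := hμm l hl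
    obtain ⟨_, _, hnear⟩ := hHfacts (μm l) (hεbM l hl)
    rw [Real.norm_eq_abs, Real.norm_eq_abs]
    exact stmt19_boundM c s q l (μm l) _ hs hq0 hqs hl.1 hm0 hmge hmeq hnear
  · positivity
  · apply div_neg_of_pos_of_neg one_pos
    linarith
  · filter_upwards [Ioo_mem_nhdsGT_of_mem (Set.left_mem_Ico.mpr hδ0)] with l hl
    exact ⟨(hμp l hl).1, (hμm l hl).1⟩
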